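/- Fix λ > 0 and let A ≥ 1 be a solution of e^{Aλ}(A−1)² = 1. Then the function F(x) = A e^{Aλx} / (e^{Aλ}(A−1) + e^{Aλx}) on [0,1] satisfies F(1) = 1, F is nondecreasing with values in [0,1], and F is a fixed point of the map T(F)(x) = exp(−λ ∫₀^{1−x} F(z) dz). -/

import Mathlib

theorem stmt_15 (lam A : ℝ) (hlam : 0 < lam) (hA : 1 ≤ A)
    (heq : Real.exp (A * lam) * (A - 1)^2 = 1) :
    let F : ℝ → ℝ := fun x =>
      A * Real.exp (A * lam * x) / (Real.exp (A * lam) * (A - 1) + Real.exp (A * lam * x));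
    F 1 = 1 ∧ MonotoneOn F (Set.Icc 0 1) ∧
    (∀ x ∈ Set.Icc (0:ℝ) 1, F x ∈ Set.Icc (0:ℝ) 1) ∧
    ∀ x ∈ Set.Icc (0:ℝ) 1, Real.exp (-(lam * ∫ z in (0:ℝ)..(1 - x), F z)) = F x := by
  intro F
  have he : 0 < Real.exp (A * lam) := Real.exp_pos _
  have hA1 : 1 < A := by
    rcases lt_or_eq_of_le hA with h | h
    · exact h
    · exfalso; rw [← h] at heq; simp at heq
  have hc : 0 < Real.exp (A * lam) * (A - 1) := mul_pos he (by linarith)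
  have hden : ∀ x : ℝ, 0 < Real.exp (A * lam) * (A - 1) + Real.exp (A * lam * x) :=
    fun x => add_pos hc (Real.exp_pos _)
  have hAlam : 0 < A * lam := mul_pos (by linarith) hlam
  have hF1 : F 1 = 1 := by
    show A * Real.exp (A * lam * 1) / _ = 1
    rw [mul_one, div_eq_one_iff_eq (by positivity)]
    ring
  have hmono : MonotoneOn F (Set.Icc 0 1) := by
    intro x hx y hy hxy
    have hE : Real.exp (A * lam * x) ≤ Real.exp (A * lam * y) :=
      Real.exp_le_exp.mpr (by nlinarith)
    show A * Real.exp (A * lam * x) / _ ≤ A * Real.exp (A * lam * y) / _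
    rw [div_le_div_iff₀ (hden x) (hden y)]
    nlinarith [mul_nonneg (mul_pos (show (0:ℝ) < A by linarith) hc).le (sub_nonneg.mpr hE)]
  have hmem : ∀ x ∈ Set.Icc (0:ℝ) 1, F x ∈ Set.Icc (0:ℝ) 1 := by
    intro x hx
    constructor
    · exact div_nonneg (by positivity) (hden x).le
    · rw [div_le_one (hden x)]
      have hE : Real.exp (A * lam * x) ≤ Real.exp (A * lam) :=
        Real.exp_le_exp.mpr (by nlinarith [hx.2])
      nlinarith
  refine ⟨hF1, hmono, hmem, ?_⟩
  have hFcont : Continuous F := by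
    apply Continuous.div
    · continuity
    · continuity
    · exact fun x => (hden x).ne'
  have hderiv : ∀ t : ℝ, HasDerivAt
      (fun z => (1/lam) * Real.log (Real.exp (A * lam) * (A - 1) + Real.exp (A * lam * z)))
      (F t) t := by
    intro t
    have h1 : HasDerivAt (fun z : ℝ => A * lam * z) (A * lam) t := by
      simpa using (hasDerivAt_id t).const_mul (A * lam)
    have h2 := (h1.exp).const_add (Real.exp (A * lam) * (A - 1))
    have h3 := (h2.log (hden t).ne').const_mul (1/lam)
    refine h3.congr_deriv ?_
    show _ = A * Real.exp (A * lam * t) / (Real.exp (A * lam) * (A - 1) + Real.exp (A * lam * t))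
    field_simp [F]
  have hint : ∀ x : ℝ, (∫ z in (0:ℝ)..(1 - x), F z) =
      (1/lam) * Real.log (Real.exp (A * lam) * (A - 1) + Real.exp (A * lam * (1 - x)))
      - (1/lam) * Real.log (Real.exp (A * lam) * (A - 1) + Real.exp (A * lam * 0)) := by
    intro x
    exact intervalIntegral.integral_eq_sub_of_hasDerivAt
      (fun t _ => hderiv t) (hFcont.intervalIntegrable _ _)
  intro x hx
  rw [hint x]
  have h0 : A * lam * 0 = 0 := by ring
  rw [h0, Real.exp_zero]
  have hexp : -(lam * ((1/lam) * Real.log (Real.exp (A * lam) * (A - 1) + Real.exp (A * lam * (1 - x)))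
      - (1/lam) * Real.log (Real.exp (A * lam) * (A - 1) + 1))) =
      Real.log (Real.exp (A * lam) * (A - 1) + 1)
      - Real.log (Real.exp (A * lam) * (A - 1) + Real.exp (A * lam * (1 - x))) := by
    field_simp
    ring
  rw [hexp, Real.exp_sub, Real.exp_log (by positivity), Real.exp_log (hden (1 - x))]
  show _ = A * Real.exp (A * lam * x) / _
  rw [div_eq_div_iff (hden (1 - x)).ne' (hden x).ne']
  have hEE : Real.exp (A * lam * (1 - x)) * Real.exp (A * lam * x) = Real.exp (A * lam) := by
    rw [← Real.exp_add]; ring_nf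
  linear_combination (Real.exp (A * lam) - Real.exp (A * lam * x)) * heq - A * hEE
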